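/- For every triple of complex numbers (t2, t4, t6), the surface in ℂ³ defined by F(X,Y,W) = −(1/64)·X⁵ + X·Y² − W² + A4·X⁴ + A3·X³ + A2·X² + A1·X + AY·Y + A0 = 0 is singular, where A4 = t2/32, A3 = −(3/128)·t2² − (1/32)·t4, A2 = (7/192)·t2·t4 + (1/32)·t6 + (7/864)·t2³, A1 = −(1/32)·t6·t2 − (5/384)·t2²·t4 − (35/27648)·t2⁴ − (1/64)·t4², AY = (1/4)·t6 + (1/24)·t2·t4 + (1/432)·t2³, and A0 = (1/128)·t6·t2² + (1/32)·t6·t4 + (11/6912)·t2³·t4 + (1/192)·t2·t4² + (1/13824)·t2⁵. That is, there exists a point (X,Y,W) ∈ ℂ³ with F(X,Y,W) = 0 at which all three partial derivatives of F vanish. (This is the type C₃ instance of the theorem that every fiber of the quotient deformation is singular.) -/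
import Mathlib

private lemma Dquint (c5 c4 c3 c2 c1 c0 x : ℂ) :
    deriv (fun t : ℂ => c5 * t ^ 5 + c4 * t ^ 4 + c3 * t ^ 3 + c2 * t ^ 2 + c1 * t + c0) x
      = 5 * c5 * x ^ 4 + 4 * c4 * x ^ 3 + 3 * c3 * x ^ 2 + 2 * c2 * x + c1 := by
  have h : HasDerivAt (fun t : ℂ => c5 * t ^ 5 + c4 * t ^ 4 + c3 * t ^ 3 + c2 * t ^ 2 + c1 * t + c0)
      (c5 * (5 * x ^ 4) + c4 * (4 * x ^ 3) + c3 * (3 * x ^ 2) + c2 * (2 * x ^ 1) + c1 * 1) x := by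
    exact ((((((hasDerivAt_pow 5 x).const_mul c5).add
      ((hasDerivAt_pow 4 x).const_mul c4)).add
      ((hasDerivAt_pow 3 x).const_mul c3)).add
      ((hasDerivAt_pow 2 x).const_mul c2)).add
      ((hasDerivAt_id x).const_mul c1)).add_const c0
  rw [h.deriv]; ring

private lemma Dquad (a b c x : ℂ) :
    deriv (fun t : ℂ => a * t ^ 2 + b * t + c) x = 2 * a * x + b := by
  have h : HasDerivAt (fun t : ℂ => a * t ^ 2 + b * t + c)
      (a * (2 * x ^ 1) + b * 1) x :=
    (((hasDerivAt_pow 2 x).const_mul a).add ((hasDerivAt_id x).const_mul b)).add_const c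
  rw [h.deriv]; ring

set_option maxHeartbeats 1600000 in
/-- Type C₃ instance: every fiber of the quotient deformation is singular. -/
theorem stmt_2 (t2 t4 t6 : ℂ) :
    ∃ X Y W : ℂ,
      -(1/64) * X ^ 5 + X * Y ^ 2 - W ^ 2
        + (t2 / 32) * X ^ 4
        + (-(3/128) * t2 ^ 2 - (1/32) * t4) * X ^ 3
        + ((7/192) * t2 * t4 + (1/32) * t6 + (7/864) * t2 ^ 3) * X ^ 2
        + (-(1/32) * t6 * t2 - (5/384) * t2 ^ 2 * t4 - (35/27648) * t2 ^ 4 - (1/64) * t4 ^ 2) * X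
        + ((1/4) * t6 + (1/24) * t2 * t4 + (1/432) * t2 ^ 3) * Y
        + ((1/128) * t6 * t2 ^ 2 + (1/32) * t6 * t4 + (11/6912) * t2 ^ 3 * t4
            + (1/192) * t2 * t4 ^ 2 + (1/13824) * t2 ^ 5) = 0 ∧
      deriv (fun X' : ℂ =>
        -(1/64) * X' ^ 5 + X' * Y ^ 2 - W ^ 2
          + (t2 / 32) * X' ^ 4
          + (-(3/128) * t2 ^ 2 - (1/32) * t4) * X' ^ 3
          + ((7/192) * t2 * t4 + (1/32) * t6 + (7/864) * t2 ^ 3) * X' ^ 2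
          + (-(1/32) * t6 * t2 - (5/384) * t2 ^ 2 * t4 - (35/27648) * t2 ^ 4 - (1/64) * t4 ^ 2) * X'
          + ((1/4) * t6 + (1/24) * t2 * t4 + (1/432) * t2 ^ 3) * Y
          + ((1/128) * t6 * t2 ^ 2 + (1/32) * t6 * t4 + (11/6912) * t2 ^ 3 * t4
              + (1/192) * t2 * t4 ^ 2 + (1/13824) * t2 ^ 5)) X = 0 ∧
      deriv (fun Y' : ℂ =>
        -(1/64) * X ^ 5 + X * Y' ^ 2 - W ^ 2
          + (t2 / 32) * X ^ 4
          + (-(3/128) * t2 ^ 2 - (1/32) * t4) * X ^ 3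
          + ((7/192) * t2 * t4 + (1/32) * t6 + (7/864) * t2 ^ 3) * X ^ 2
          + (-(1/32) * t6 * t2 - (5/384) * t2 ^ 2 * t4 - (35/27648) * t2 ^ 4 - (1/64) * t4 ^ 2) * X
          + ((1/4) * t6 + (1/24) * t2 * t4 + (1/432) * t2 ^ 3) * Y'
          + ((1/128) * t6 * t2 ^ 2 + (1/32) * t6 * t4 + (11/6912) * t2 ^ 3 * t4
              + (1/192) * t2 * t4 ^ 2 + (1/13824) * t2 ^ 5)) Y = 0 ∧
      deriv (fun W' : ℂ =>
        -(1/64) * X ^ 5 + X * Y ^ 2 - W' ^ 2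
          + (t2 / 32) * X ^ 4
          + (-(3/128) * t2 ^ 2 - (1/32) * t4) * X ^ 3
          + ((7/192) * t2 * t4 + (1/32) * t6 + (7/864) * t2 ^ 3) * X ^ 2
          + (-(1/32) * t6 * t2 - (5/384) * t2 ^ 2 * t4 - (35/27648) * t2 ^ 4 - (1/64) * t4 ^ 2) * X
          + ((1/4) * t6 + (1/24) * t2 * t4 + (1/432) * t2 ^ 3) * Y
          + ((1/128) * t6 * t2 ^ 2 + (1/32) * t6 * t4 + (11/6912) * t2 ^ 3 * t4
              + (1/192) * t2 * t4 ^ 2 + (1/13824) * t2 ^ 5)) W = 0 := by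
  -- a root of the cubic  X³ - t2 X² + (t2²/4 + t4) X + (-t6 - t2 t4/6 - t2³/108)
  obtain ⟨x, hx⟩ : ∃ x : ℂ, x ^ 3 - t2 * x ^ 2 + (t2 ^ 2 / 4 + t4) * x
      + (-t6 - t2 * t4 / 6 - t2 ^ 3 / 108) = 0 := by
    set f : Polynomial ℂ := Polynomial.X ^ 3 - Polynomial.C t2 * Polynomial.X ^ 2
      + Polynomial.C (t2 ^ 2 / 4 + t4) * Polynomial.X
      + Polynomial.C (-t6 - t2 * t4 / 6 - t2 ^ 3 / 108) with hf
    have hdeg : 0 < f.degree := by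
      have : f.degree = 3 := by rw [hf]; compute_degree!
      rw [this]; norm_num
    obtain ⟨x, hroot⟩ := Complex.exists_root hdeg
    refine ⟨x, ?_⟩
    have h := hroot
    simp only [Polynomial.IsRoot, hf, Polynomial.eval_add, Polynomial.eval_sub,
      Polynomial.eval_mul, Polynomial.eval_pow, Polynomial.eval_C, Polynomial.eval_X] at h
    linear_combination h
  by_cases h0 : x = 0
  · -- degenerate case : the cubic has constant term zero
    have hc : -t6 - t2 * t4 / 6 - t2 ^ 3 / 108 = 0 := by
      rw [h0] at hx; linear_combination hx
    obtain ⟨y, hy⟩ : ∃ y : ℂ, y ^ 2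
        = -(-(1/32) * t6 * t2 - (5/384) * t2 ^ 2 * t4 - (35/27648) * t2 ^ 4 - (1/64) * t4 ^ 2) :=
      IsAlgClosed.exists_pow_nat_eq _ two_pos
    refine ⟨0, y, 0, ?_, ?_, ?_, ?_⟩
    · linear_combination (-(y/4) - (t2 ^ 2 / 4 + t4) / 32) * hc
    · rw [show (fun X' : ℂ =>
        -(1/64) * X' ^ 5 + X' * y ^ 2 - (0:ℂ) ^ 2
          + (t2 / 32) * X' ^ 4
          + (-(3/128) * t2 ^ 2 - (1/32) * t4) * X' ^ 3
          + ((7/192) * t2 * t4 + (1/32) * t6 + (7/864) * t2 ^ 3) * X' ^ 2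
          + (-(1/32) * t6 * t2 - (5/384) * t2 ^ 2 * t4 - (35/27648) * t2 ^ 4 - (1/64) * t4 ^ 2) * X'
          + ((1/4) * t6 + (1/24) * t2 * t4 + (1/432) * t2 ^ 3) * y
          + ((1/128) * t6 * t2 ^ 2 + (1/32) * t6 * t4 + (11/6912) * t2 ^ 3 * t4
              + (1/192) * t2 * t4 ^ 2 + (1/13824) * t2 ^ 5))
        = (fun X' : ℂ => (-(1/64)) * X' ^ 5 + (t2 / 32) * X' ^ 4
            + (-(3/128) * t2 ^ 2 - (1/32) * t4) * X' ^ 3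
            + ((7/192) * t2 * t4 + (1/32) * t6 + (7/864) * t2 ^ 3) * X' ^ 2
            + (y ^ 2 + (-(1/32) * t6 * t2 - (5/384) * t2 ^ 2 * t4 - (35/27648) * t2 ^ 4
                - (1/64) * t4 ^ 2)) * X'
            + (((1/4) * t6 + (1/24) * t2 * t4 + (1/432) * t2 ^ 3) * y
              + ((1/128) * t6 * t2 ^ 2 + (1/32) * t6 * t4 + (11/6912) * t2 ^ 3 * t4
                + (1/192) * t2 * t4 ^ 2 + (1/13824) * t2 ^ 5)))
        from funext fun t => by ring, Dquint]
      linear_combination hy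
    · rw [show (fun Y' : ℂ =>
        -(1/64) * (0:ℂ) ^ 5 + 0 * Y' ^ 2 - (0:ℂ) ^ 2
          + (t2 / 32) * (0:ℂ) ^ 4
          + (-(3/128) * t2 ^ 2 - (1/32) * t4) * (0:ℂ) ^ 3
          + ((7/192) * t2 * t4 + (1/32) * t6 + (7/864) * t2 ^ 3) * (0:ℂ) ^ 2
          + (-(1/32) * t6 * t2 - (5/384) * t2 ^ 2 * t4 - (35/27648) * t2 ^ 4 - (1/64) * t4 ^ 2) * 0
          + ((1/4) * t6 + (1/24) * t2 * t4 + (1/432) * t2 ^ 3) * Y'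
          + ((1/128) * t6 * t2 ^ 2 + (1/32) * t6 * t4 + (11/6912) * t2 ^ 3 * t4
              + (1/192) * t2 * t4 ^ 2 + (1/13824) * t2 ^ 5))
        = (fun Y' : ℂ => (0:ℂ) * Y' ^ 2
            + ((1/4) * t6 + (1/24) * t2 * t4 + (1/432) * t2 ^ 3) * Y'
            + ((1/128) * t6 * t2 ^ 2 + (1/32) * t6 * t4 + (11/6912) * t2 ^ 3 * t4
                + (1/192) * t2 * t4 ^ 2 + (1/13824) * t2 ^ 5))
        from funext fun t => by ring, Dquad]
      linear_combination (-(1/4)) * hc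
    · rw [show (fun W' : ℂ =>
        -(1/64) * (0:ℂ) ^ 5 + 0 * y ^ 2 - W' ^ 2
          + (t2 / 32) * (0:ℂ) ^ 4
          + (-(3/128) * t2 ^ 2 - (1/32) * t4) * (0:ℂ) ^ 3
          + ((7/192) * t2 * t4 + (1/32) * t6 + (7/864) * t2 ^ 3) * (0:ℂ) ^ 2
          + (-(1/32) * t6 * t2 - (5/384) * t2 ^ 2 * t4 - (35/27648) * t2 ^ 4 - (1/64) * t4 ^ 2) * 0
          + ((1/4) * t6 + (1/24) * t2 * t4 + (1/432) * t2 ^ 3) * y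
          + ((1/128) * t6 * t2 ^ 2 + (1/32) * t6 * t4 + (11/6912) * t2 ^ 3 * t4
              + (1/192) * t2 * t4 ^ 2 + (1/13824) * t2 ^ 5))
        = (fun W' : ℂ => (-1 : ℂ) * W' ^ 2 + (0:ℂ) * W'
            + (0 * y ^ 2
              + ((1/4) * t6 + (1/24) * t2 * t4 + (1/432) * t2 ^ 3) * y
              + ((1/128) * t6 * t2 ^ 2 + (1/32) * t6 * t4 + (11/6912) * t2 ^ 3 * t4
                + (1/192) * t2 * t4 ^ 2 + (1/13824) * t2 ^ 5)))
        from funext fun t => by ring, Dquad]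
      ring
  · -- generic case : x ≠ 0
    refine ⟨x, -((1/4) * t6 + (1/24) * t2 * t4 + (1/432) * t2 ^ 3) / (2 * x), 0, ?_, ?_, ?_, ?_⟩
    · have key : x * (-(1/64) * x ^ 5 + x * (-((1/4) * t6 + (1/24) * t2 * t4 + (1/432) * t2 ^ 3) / (2 * x)) ^ 2 - (0:ℂ) ^ 2
          + (t2 / 32) * x ^ 4
          + (-(3/128) * t2 ^ 2 - (1/32) * t4) * x ^ 3
          + ((7/192) * t2 * t4 + (1/32) * t6 + (7/864) * t2 ^ 3) * x ^ 2
          + (-(1/32) * t6 * t2 - (5/384) * t2 ^ 2 * t4 - (35/27648) * t2 ^ 4 - (1/64) * t4 ^ 2) * x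
          + ((1/4) * t6 + (1/24) * t2 * t4 + (1/432) * t2 ^ 3) * (-((1/4) * t6 + (1/24) * t2 * t4 + (1/432) * t2 ^ 3) / (2 * x))
          + ((1/128) * t6 * t2 ^ 2 + (1/32) * t6 * t4 + (11/6912) * t2 ^ 3 * t4
              + (1/192) * t2 * t4 ^ 2 + (1/13824) * t2 ^ 5)) = 0 := by
        have hy : 2 * x * (-((1/4) * t6 + (1/24) * t2 * t4 + (1/432) * t2 ^ 3) / (2 * x)) + ((1/4) * t6 + (1/24) * t2 * t4 + (1/432) * t2 ^ 3) = 0 := by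
          field_simp
          ring
        linear_combination ((-(1/64)) * (x ^ 3 - t2 * x ^ 2 + (t2 ^ 2 / 4 + t4) * x + (-t6 - t2 * t4 / 6 - t2 ^ 3 / 108))) * hx
          + ((2 * x * (-((1/4) * t6 + (1/24) * t2 * t4 + (1/432) * t2 ^ 3) / (2 * x)) + ((1/4) * t6 + (1/24) * t2 * t4 + (1/432) * t2 ^ 3)) / 4) * hy
      exact (mul_eq_zero.mp key).resolve_left h0
    · rw [show (fun X' : ℂ =>
        -(1/64) * X' ^ 5 + X' * (-((1/4) * t6 + (1/24) * t2 * t4 + (1/432) * t2 ^ 3) / (2 * x)) ^ 2 - (0:ℂ) ^ 2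
          + (t2 / 32) * X' ^ 4
          + (-(3/128) * t2 ^ 2 - (1/32) * t4) * X' ^ 3
          + ((7/192) * t2 * t4 + (1/32) * t6 + (7/864) * t2 ^ 3) * X' ^ 2
          + (-(1/32) * t6 * t2 - (5/384) * t2 ^ 2 * t4 - (35/27648) * t2 ^ 4 - (1/64) * t4 ^ 2) * X'
          + ((1/4) * t6 + (1/24) * t2 * t4 + (1/432) * t2 ^ 3) * (-((1/4) * t6 + (1/24) * t2 * t4 + (1/432) * t2 ^ 3) / (2 * x))
          + ((1/128) * t6 * t2 ^ 2 + (1/32) * t6 * t4 + (11/6912) * t2 ^ 3 * t4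
              + (1/192) * t2 * t4 ^ 2 + (1/13824) * t2 ^ 5))
        = (fun X' : ℂ => (-(1/64)) * X' ^ 5 + (t2 / 32) * X' ^ 4
            + (-(3/128) * t2 ^ 2 - (1/32) * t4) * X' ^ 3
            + ((7/192) * t2 * t4 + (1/32) * t6 + (7/864) * t2 ^ 3) * X' ^ 2
            + ((-((1/4) * t6 + (1/24) * t2 * t4 + (1/432) * t2 ^ 3) / (2 * x)) ^ 2 + (-(1/32) * t6 * t2 - (5/384) * t2 ^ 2 * t4 - (35/27648) * t2 ^ 4 - (1/64) * t4 ^ 2)) * X'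
            + (((1/4) * t6 + (1/24) * t2 * t4 + (1/432) * t2 ^ 3) * (-((1/4) * t6 + (1/24) * t2 * t4 + (1/432) * t2 ^ 3) / (2 * x))
              + ((1/128) * t6 * t2 ^ 2 + (1/32) * t6 * t4 + (11/6912) * t2 ^ 3 * t4
              + (1/192) * t2 * t4 ^ 2 + (1/13824) * t2 ^ 5)))
        from funext fun t => by ring, Dquint]
      have key : x ^ 2 * (5 * (-(1/64)) * x ^ 4 + 4 * (t2 / 32) * x ^ 3
          + 3 * (-(3/128) * t2 ^ 2 - (1/32) * t4) * x ^ 2 + 2 * ((7/192) * t2 * t4 + (1/32) * t6 + (7/864) * t2 ^ 3) * x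
          + ((-((1/4) * t6 + (1/24) * t2 * t4 + (1/432) * t2 ^ 3) / (2 * x)) ^ 2 + (-(1/32) * t6 * t2 - (5/384) * t2 ^ 2 * t4 - (35/27648) * t2 ^ 4 - (1/64) * t4 ^ 2))) = 0 := by
        have hy : 2 * x * (-((1/4) * t6 + (1/24) * t2 * t4 + (1/432) * t2 ^ 3) / (2 * x)) + ((1/4) * t6 + (1/24) * t2 * t4 + (1/432) * t2 ^ 3) = 0 := by
          field_simp
          ring
        linear_combination ((-(x)/32) * (3 * x ^ 2 - 2 * t2 * x + (t2 ^ 2 / 4 + t4)) + (1/64) * (x ^ 3 - t2 * x ^ 2 + (t2 ^ 2 / 4 + t4) * x + (-t6 - t2 * t4 / 6 - t2 ^ 3 / 108))) * hx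
          + ((2 * x * (-((1/4) * t6 + (1/24) * t2 * t4 + (1/432) * t2 ^ 3) / (2 * x)) - ((1/4) * t6 + (1/24) * t2 * t4 + (1/432) * t2 ^ 3)) / 4) * hy
      have hx2 : x ^ 2 ≠ 0 := pow_ne_zero 2 h0
      exact (mul_eq_zero.mp key).resolve_left hx2
    · rw [show (fun Y' : ℂ =>
        -(1/64) * x ^ 5 + x * Y' ^ 2 - (0:ℂ) ^ 2
          + (t2 / 32) * x ^ 4
          + (-(3/128) * t2 ^ 2 - (1/32) * t4) * x ^ 3
          + ((7/192) * t2 * t4 + (1/32) * t6 + (7/864) * t2 ^ 3) * x ^ 2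
          + (-(1/32) * t6 * t2 - (5/384) * t2 ^ 2 * t4 - (35/27648) * t2 ^ 4 - (1/64) * t4 ^ 2) * x
          + ((1/4) * t6 + (1/24) * t2 * t4 + (1/432) * t2 ^ 3) * Y'
          + ((1/128) * t6 * t2 ^ 2 + (1/32) * t6 * t4 + (11/6912) * t2 ^ 3 * t4
              + (1/192) * t2 * t4 ^ 2 + (1/13824) * t2 ^ 5))
        = (fun Y' : ℂ => x * Y' ^ 2
            + ((1/4) * t6 + (1/24) * t2 * t4 + (1/432) * t2 ^ 3) * Y'
            + (-(1/64) * x ^ 5 - (0:ℂ) ^ 2 + (t2 / 32) * x ^ 4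
              + (-(3/128) * t2 ^ 2 - (1/32) * t4) * x ^ 3
              + ((7/192) * t2 * t4 + (1/32) * t6 + (7/864) * t2 ^ 3) * x ^ 2
              + (-(1/32) * t6 * t2 - (5/384) * t2 ^ 2 * t4 - (35/27648) * t2 ^ 4 - (1/64) * t4 ^ 2) * x
              + ((1/128) * t6 * t2 ^ 2 + (1/32) * t6 * t4 + (11/6912) * t2 ^ 3 * t4
              + (1/192) * t2 * t4 ^ 2 + (1/13824) * t2 ^ 5)))
        from funext fun t => by ring, Dquad]
      field_simp
      ring
    · rw [show (fun W' : ℂ =>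
        -(1/64) * x ^ 5 + x * (-((1/4) * t6 + (1/24) * t2 * t4 + (1/432) * t2 ^ 3) / (2 * x)) ^ 2 - W' ^ 2
          + (t2 / 32) * x ^ 4
          + (-(3/128) * t2 ^ 2 - (1/32) * t4) * x ^ 3
          + ((7/192) * t2 * t4 + (1/32) * t6 + (7/864) * t2 ^ 3) * x ^ 2
          + (-(1/32) * t6 * t2 - (5/384) * t2 ^ 2 * t4 - (35/27648) * t2 ^ 4 - (1/64) * t4 ^ 2) * x
          + ((1/4) * t6 + (1/24) * t2 * t4 + (1/432) * t2 ^ 3) * (-((1/4) * t6 + (1/24) * t2 * t4 + (1/432) * t2 ^ 3) / (2 * x))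
          + ((1/128) * t6 * t2 ^ 2 + (1/32) * t6 * t4 + (11/6912) * t2 ^ 3 * t4
              + (1/192) * t2 * t4 ^ 2 + (1/13824) * t2 ^ 5))
        = (fun W' : ℂ => (-1 : ℂ) * W' ^ 2 + (0:ℂ) * W'
            + (-(1/64) * x ^ 5 + x * (-((1/4) * t6 + (1/24) * t2 * t4 + (1/432) * t2 ^ 3) / (2 * x)) ^ 2 + (t2 / 32) * x ^ 4
              + (-(3/128) * t2 ^ 2 - (1/32) * t4) * x ^ 3
              + ((7/192) * t2 * t4 + (1/32) * t6 + (7/864) * t2 ^ 3) * x ^ 2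
              + (-(1/32) * t6 * t2 - (5/384) * t2 ^ 2 * t4 - (35/27648) * t2 ^ 4 - (1/64) * t4 ^ 2) * x
              + ((1/4) * t6 + (1/24) * t2 * t4 + (1/432) * t2 ^ 3) * (-((1/4) * t6 + (1/24) * t2 * t4 + (1/432) * t2 ^ 3) / (2 * x))
              + ((1/128) * t6 * t2 ^ 2 + (1/32) * t6 * t4 + (11/6912) * t2 ^ 3 * t4
              + (1/192) * t2 * t4 ^ 2 + (1/13824) * t2 ^ 5)))
        from funext fun t => by ring, Dquad]
      ring
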